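/- (Condorcet jury theorem, part (a)) Let n be an odd natural number with n ≥ 3, and let X₁,…,Xₙ be i.i.d. Bernoulli random variables with P(Xᵢ = 1) = θ where 1/2 < θ < 1. Then Pₙ = P(∑ Xᵢ > n/2) > θ. -/

import Mathlib

open MeasureTheory ProbabilityTheory Finset
open scoped ENNReal

/-- The purely real/combinatorial core: sum over majority subsets beats
sum over subsets containing a fixed voter. -/
lemma condorcet_real_core (n : ℕ) (hodd : Odd n) (hn : 3 ≤ n) (θ : ℝ)
    (hθ1 : 1/2 < θ) (hθ2 : θ < 1) (i0 : Fin n) :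
    ∑ s ∈ Finset.univ.filter (fun s : Finset (Fin n) => i0 ∈ s),
        θ ^ s.card * (1 - θ) ^ (n - s.card)
    < ∑ s ∈ Finset.univ.filter (fun s : Finset (Fin n) => (n : ℝ)/2 < s.card),
        θ ^ s.card * (1 - θ) ^ (n - s.card) := by
  set w : Finset (Fin n) → ℝ := fun s => θ ^ s.card * (1 - θ) ^ (n - s.card) with hw
  set P : Finset (Fin n) → Prop := fun s => (n : ℝ)/2 < s.card with hP
  set Q : Finset (Fin n) → Prop := fun s => i0 ∈ s with hQ
  have hθ0 : (0:ℝ) < 1 - θ := by linarith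
  have hθθ : 1 - θ < θ := by linarith
  -- split both sums
  have hsplitP := Finset.sum_filter_add_sum_filter_not (Finset.univ.filter P) Q w
  have hsplitQ := Finset.sum_filter_add_sum_filter_not (Finset.univ.filter Q) P w
  rw [← hsplitP, ← hsplitQ]
  have hcomm : (Finset.univ.filter P).filter Q = (Finset.univ.filter Q).filter P := by
    ext s; simp [and_comm]
  rw [hcomm]
  have key : ∑ s ∈ (Finset.univ.filter Q).filter (fun s => ¬ P s), w s
      < ∑ s ∈ (Finset.univ.filter P).filter (fun s => ¬ Q s), w s := by
    -- rewrite the RHS as a sum over the LHS index set via complement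
    have hbij : ∑ s ∈ (Finset.univ.filter P).filter (fun s => ¬ Q s), w s
        = ∑ s ∈ (Finset.univ.filter Q).filter (fun s => ¬ P s), w sᶜ := by
      refine Finset.sum_nbij' (fun s => sᶜ) (fun s => sᶜ) ?_ ?_ ?_ ?_ ?_
      · intro s hs
        simp only [Finset.mem_filter, Finset.mem_univ, true_and, hP, hQ] at hs ⊢
        obtain ⟨h1, h2⟩ := hs
        have hcard : sᶜ.card = n - s.card := by
          simp [Finset.card_compl]
        constructor
        · simpa [Finset.mem_compl] using h2
        · intro hlt
          have hsn : s.card ≤ n := by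
            simpa using Finset.card_le_univ s
          have hcn : (n:ℝ)/2 < (n:ℝ) - s.card := by
            rw [hcard] at hlt
            push_cast [Nat.cast_sub hsn] at hlt
            linarith
          linarith
      · intro s hs
        simp only [Finset.mem_filter, Finset.mem_univ, true_and, hP, hQ] at hs ⊢
        obtain ⟨h1, h2⟩ := hs
        have hsn : s.card ≤ n := by simpa using Finset.card_le_univ s
        have hcard : sᶜ.card = n - s.card := by simp [Finset.card_compl]
        have h2n : 2 * s.card ≠ n := by
          intro h; exact (Nat.not_odd_iff_even.mpr ⟨s.card, by omega⟩) (h ▸ hodd)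
        have hlt : (s.card : ℝ) ≤ (n:ℝ)/2 := le_of_not_gt h2
        have hle : 2 * s.card ≤ n := by
          have h' : (s.card:ℝ) * 2 ≤ n := by linarith
          exact_mod_cast (by linarith : (2 * s.card : ℝ) ≤ (n:ℝ))
        have hlt' : 2 * s.card < n := by omega
        constructor
        · rw [hcard, div_lt_iff₀ (by norm_num : (0:ℝ) < 2)]
          exact_mod_cast (by omega : n < (n - s.card) * 2)
        · simpa [Finset.mem_compl] using h1
      · intro s _; simp
      · intro s _; simp
      · intro s _; simp
    rw [hbij]
    apply Finset.sum_lt_sum_of_nonempty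
    · -- nonempty: the singleton {i0}
      refine ⟨{i0}, ?_⟩
      simp only [Finset.mem_filter, Finset.mem_univ, true_and, hP, hQ]
      constructor
      · exact Finset.mem_singleton_self i0
      · intro h
        simp only [Finset.card_singleton, Nat.cast_one] at h
        have : (3:ℝ) ≤ n := by exact_mod_cast hn
        linarith
    · intro s hs
      simp only [Finset.mem_filter, Finset.mem_univ, true_and, hP, hQ] at hs
      obtain ⟨h1, h2⟩ := hs
      have hsn : s.card ≤ n := by simpa using Finset.card_le_univ s
      have h2n : 2 * s.card ≠ n := by
        intro h; exact (Nat.not_odd_iff_even.mpr ⟨s.card, by omega⟩) (h ▸ hodd)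
      have hlt : (s.card : ℝ) ≤ (n:ℝ)/2 := le_of_not_gt h2
      have hle : 2 * s.card ≤ n := by
        have h' : (s.card:ℝ) * 2 ≤ n := by linarith
        exact_mod_cast (by linarith : (2 * s.card : ℝ) ≤ (n:ℝ))
      have hlt' : 2 * s.card < n := by omega
      have hcard : sᶜ.card = n - s.card := by simp [Finset.card_compl]
      set a := s.card with ha
      set k := n - 2 * a with hk
      have hk1 : 1 ≤ k := by omega
      have hna : n - a = a + k := by omega
      have hna' : n - (n - a) = a := by omega
      have hkey : (1 - θ)^k < θ^k := pow_lt_pow_left₀ hθθ (le_of_lt hθ0) (by omega)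
      have : θ^a * (1-θ)^(n-a) < θ^(n-a) * (1-θ)^a := by
        rw [hna, pow_add, pow_add]
        calc θ^a * ((1-θ)^a * (1-θ)^k) = (θ^a * (1-θ)^a) * (1-θ)^k := by ring
          _ < (θ^a * (1-θ)^a) * θ^k := by
              apply mul_lt_mul_of_pos_left hkey
              positivity
          _ = θ^a * θ^k * (1-θ)^a := by ring
      simpa [hw, hcard, hna'] using this
  have hnonneg1 : 0 ≤ ∑ s ∈ (Finset.univ.filter P).filter Q, w s := by
    apply Finset.sum_nonneg
    intro s _
    have : (0:ℝ) ≤ θ := by linarith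
    positivity
  linarith

theorem condorcet_jury_a
    {Ω : Type*} [MeasurableSpace Ω] (μ : Measure Ω) [IsProbabilityMeasure μ]
    (n : ℕ) (hodd : Odd n) (hn : 3 ≤ n) (θ : ℝ) (hθ1 : 1/2 < θ) (hθ2 : θ < 1)
    (X : Fin n → Ω → ℕ)
    (hmeas : ∀ i, Measurable (X i))
    (hval : ∀ i, ∀ ω, X i ω ≤ 1)
    (hindep : iIndepFun X μ)
    (hbern : ∀ i, μ {ω | X i ω = 1} = ENNReal.ofReal θ) :
    μ {ω | (n : ℝ) / 2 < (∑ i, X i ω : ℕ)} > ENNReal.ofReal θ := by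
  have hθ0 : (0:ℝ) ≤ θ := by linarith
  have hθ0' : (0:ℝ) ≤ 1 - θ := by linarith
  have i0 : Fin n := ⟨0, by omega⟩
  -- atoms
  set A : Finset (Fin n) → Set Ω :=
    fun s => ⋂ i, X i ⁻¹' {if i ∈ s then 1 else 0} with hA
  have hAmeas : ∀ s, MeasurableSet (A s) :=
    fun s => MeasurableSet.iInter fun i => hmeas i (measurableSet_singleton _)
  -- single-coordinate measures
  have hone : ∀ i, μ (X i ⁻¹' {1}) = ENNReal.ofReal θ := by
    intro i
    have : X i ⁻¹' {1} = {ω | X i ω = 1} := by ext ω; simp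
    rw [this, hbern i]
  have hzero : ∀ i, μ (X i ⁻¹' {0}) = ENNReal.ofReal (1 - θ) := by
    intro i
    have hset : X i ⁻¹' {0} = {ω | X i ω = 1}ᶜ := by
      ext ω
      have := hval i ω
      simp only [Set.mem_preimage, Set.mem_singleton_iff, Set.mem_compl_iff,
        Set.mem_setOf_eq]
      omega
    have hms : MeasurableSet {ω | X i ω = 1} := hmeas i (measurableSet_singleton 1)
    rw [hset, measure_compl hms (measure_ne_top μ _), measure_univ, hbern i,
      ENNReal.ofReal_sub 1 hθ0, ENNReal.ofReal_one]
  -- measure of atoms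
  have hAmu : ∀ s : Finset (Fin n),
      μ (A s) = ENNReal.ofReal (θ ^ s.card * (1 - θ) ^ (n - s.card)) := by
    intro s
    have hprod : μ (A s) = ∏ i, μ (X i ⁻¹' {if i ∈ s then 1 else 0}) := by
      apply hindep.meas_iInter
      intro i
      exact ⟨{if i ∈ s then 1 else 0}, measurableSet_singleton _, rfl⟩
    rw [hprod]
    have heach : ∀ i, μ (X i ⁻¹' {if i ∈ s then 1 else 0})
        = if i ∈ s then ENNReal.ofReal θ else ENNReal.ofReal (1 - θ) := by
      intro i
      by_cases h : i ∈ s <;> simp [h, hone i, hzero i]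
    simp_rw [heach]
    rw [← Finset.prod_mul_prod_compl s]
    have h1 : ∏ i ∈ s, (if i ∈ s then ENNReal.ofReal θ else ENNReal.ofReal (1-θ))
        = (ENNReal.ofReal θ) ^ s.card := by
      rw [Finset.prod_congr rfl (fun i hi => if_pos hi), Finset.prod_const]
    have h2 : ∏ i ∈ sᶜ, (if i ∈ s then ENNReal.ofReal θ else ENNReal.ofReal (1-θ))
        = (ENNReal.ofReal (1-θ)) ^ (n - s.card) := by
      rw [Finset.prod_congr rfl (fun i hi => if_neg (Finset.mem_compl.mp hi)),
        Finset.prod_const, Finset.card_compl, Fintype.card_fin]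
    rw [h1, h2, ENNReal.ofReal_mul (by positivity), ENNReal.ofReal_pow hθ0,
      ENNReal.ofReal_pow hθ0']
  classical
  -- membership in atoms
  have hmem : ∀ (s : Finset (Fin n)) (ω : Ω),
      ω ∈ A s ↔ ∀ i, X i ω = if i ∈ s then 1 else 0 := by
    intro s ω
    simp [hA, Set.mem_iInter]
  -- every ω is in the atom of its "success set"
  have hcover : ∀ ω : Ω, ω ∈ A (Finset.univ.filter fun i => X i ω = 1) := by
    intro ω
    rw [hmem]
    intro i
    have := hval i ω
    by_cases h : X i ω = 1
    · simp [h]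
    · simp only [Finset.mem_filter, Finset.mem_univ, true_and, h, if_false]
      omega
  -- on atom A s, the sum of votes is s.card
  have hsum : ∀ (s : Finset (Fin n)) (ω : Ω), ω ∈ A s → (∑ i, X i ω) = s.card := by
    intro s ω hω
    rw [hmem] at hω
    calc (∑ i, X i ω) = ∑ i, (if i ∈ s then 1 else 0) :=
          Finset.sum_congr rfl (fun i _ => hω i)
      _ = s.card := by simp [Finset.sum_ite_mem]
  -- atoms are pairwise disjoint
  have hdisj : ∀ (t : Finset (Finset (Fin n))), Set.PairwiseDisjoint (↑t) A := by
    intro t s _ u _ hne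
    refine Set.disjoint_left.mpr ?_
    intro ω hωs hωu
    apply hne
    ext i
    have h1 := (hmem s ω).mp hωs i
    have h2 := (hmem u ω).mp hωu i
    by_cases hs' : i ∈ s <;> by_cases hu' : i ∈ u
    · simp [hs', hu']
    · rw [if_pos hs'] at h1; rw [if_neg hu'] at h2; exfalso; omega
    · rw [if_neg hs'] at h1; rw [if_pos hu'] at h2; exfalso; omega
    · simp [hs', hu']
  -- decompose the majority event
  have hEvent : {ω | (n:ℝ)/2 < (∑ i, X i ω : ℕ)}
      = ⋃ s ∈ Finset.univ.filter (fun s : Finset (Fin n) => (n:ℝ)/2 < s.card), A s := by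
    ext ω
    simp only [Set.mem_setOf_eq, Set.mem_iUnion, Finset.mem_filter, Finset.mem_univ,
      true_and, exists_prop]
    constructor
    · intro h
      refine ⟨Finset.univ.filter fun i => X i ω = 1, ?_, hcover ω⟩
      rw [← hsum _ ω (hcover ω)]
      exact h
    · rintro ⟨s, hs, hω⟩
      rw [hsum s ω hω]
      exact hs
  -- decompose the single-voter event
  have hEvent0 : {ω | X i0 ω = 1}
      = ⋃ s ∈ Finset.univ.filter (fun s : Finset (Fin n) => i0 ∈ s), A s := by
    ext ω
    simp only [Set.mem_setOf_eq, Set.mem_iUnion, Finset.mem_filter, Finset.mem_univ,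
      true_and, exists_prop]
    constructor
    · intro h
      refine ⟨Finset.univ.filter fun i => X i ω = 1, ?_, hcover ω⟩
      simp [h]
    · rintro ⟨s, hs, hω⟩
      have := (hmem s ω).mp hω i0
      simpa [hs] using this
  -- compute both measures as finite sums
  have hμEvent : μ {ω | (n:ℝ)/2 < (∑ i, X i ω : ℕ)}
      = ENNReal.ofReal (∑ s ∈ Finset.univ.filter
          (fun s : Finset (Fin n) => (n:ℝ)/2 < s.card),
          θ ^ s.card * (1 - θ) ^ (n - s.card)) := by
    rw [hEvent, measure_biUnion_finset (hdisj _) (fun s _ => hAmeas s),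
      ENNReal.ofReal_sum_of_nonneg (fun s _ => by positivity)]
    exact Finset.sum_congr rfl fun s _ => hAmu s
  have hμEvent0 : ENNReal.ofReal θ
      = ENNReal.ofReal (∑ s ∈ Finset.univ.filter
          (fun s : Finset (Fin n) => i0 ∈ s),
          θ ^ s.card * (1 - θ) ^ (n - s.card)) := by
    rw [← hbern i0, hEvent0, measure_biUnion_finset (hdisj _) (fun s _ => hAmeas s),
      ENNReal.ofReal_sum_of_nonneg (fun s _ => by positivity)]
    exact Finset.sum_congr rfl fun s _ => hAmu s
  rw [gt_iff_lt, hμEvent0, hμEvent]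
  have hcore := condorcet_real_core n hodd hn θ hθ1 hθ2 i0
  have hpos : 0 < ∑ s ∈ Finset.univ.filter
      (fun s : Finset (Fin n) => (n:ℝ)/2 < s.card),
      θ ^ s.card * (1 - θ) ^ (n - s.card) := by
    refine lt_of_le_of_lt ?_ hcore
    apply Finset.sum_nonneg
    intro s _
    positivity
  exact (ENNReal.ofReal_lt_ofReal_iff hpos).mpr hcore
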